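/- Let e, d, L be real numbers with e > 0, d > 0, L ≥ 0, let n be a natural number with n ≥ 1 and n·d > e, and let i be a natural number with (i : ℝ) ≥ n·L/(n·d − e). Then e + (i+1)·d − (⌊i/n⌋ + 1)·e > L, where ⌊i/n⌋ denotes natural-number division. -/

import Mathlib

/-- For any claimed lag bound `L ≥ 0`, taking `i ≥ n·L/(n·d − e)` makes the
replication lag `e + (i+1)·d − (⌊i/n⌋ + 1)·e` exceed `L`. -/
theorem replication_lag_exceeds_bound
    (e d L : ℝ) (he : 0 < e) (hd : 0 < d) (hL : 0 ≤ L)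
    (n : ℕ) (hn : 1 ≤ n) (hnd : (n : ℝ) * d > e)
    (i : ℕ) (hi : (i : ℝ) ≥ (n : ℝ) * L / ((n : ℝ) * d - e)) :
    e + ((i : ℝ) + 1) * d - ((i / n + 1 : ℕ) : ℝ) * e > L := by
  have hn0 : (0:ℝ) < (n:ℝ) := by exact_mod_cast hn
  have hpos : (0:ℝ) < (n:ℝ) * d - e := by linarith
  have h1 : ((i / n : ℕ) : ℝ) ≤ (i:ℝ) / (n:ℝ) := Nat.cast_div_le
  have h2 : (i:ℝ) * ((n:ℝ) * d - e) ≥ (n:ℝ) * L := by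
    have := (div_le_iff₀ hpos).mp hi
    linarith
  have h3 : (i:ℝ) * ((n:ℝ) * d - e) / (n:ℝ) ≥ L := by
    rw [ge_iff_le, le_div_iff₀ hn0]
    linarith
  have key : ((i / n + 1 : ℕ) : ℝ) * e ≤ ((i:ℝ)/(n:ℝ) + 1) * e := by
    push_cast
    nlinarith
  have h4 : (i:ℝ) * ((n:ℝ) * d - e) / (n:ℝ) = (i:ℝ) * d - (i:ℝ)/(n:ℝ) * e := by
    field_simp
  nlinarith [h3, h4, key]
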